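/- Fix i ∈ [n] and suppose |E_t| − |N_i(t)| ≥ 1 for all t ≥ 0. Let Z_t = ∑_{p,q ∈ [n]} [ε² ∧ (x_p(t) − x_q(t))²] ∨ (ε²·𝟙{(p,q) ∉ E}). Then for all t ≥ 0 and k ≥ 0, (x_i(t) − x_i(t+k))² ≤ (k/4)·(Z_t − Z_{t+k}). -/

import Mathlib

open Finset
open scoped Classical

/-- The threshold graph `G_t`: social neighbors whose garbage differs by at most `ε`. -/
def Gt {n : ℕ} (G : SimpleGraph (Fin n)) (x : ℕ → Fin n → ℝ) (ε : ℝ) (t : ℕ) :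
    SimpleGraph (Fin n) where
  Adj i j := G.Adj i j ∧ |x t i - x t j| ≤ ε
  symm := by
    constructor
    intro i j h
    exact ⟨h.1.symm, by rw [abs_sub_comm]; exact h.2⟩
  loopless := by
    constructor
    intro i h
    exact G.irrefl h.1

/-- `|E_t|`: the number of edges of `G_t`. -/
noncomputable def Ecard {n : ℕ} (G : SimpleGraph (Fin n)) (x : ℕ → Fin n → ℝ) (ε : ℝ)
    (t : ℕ) : ℕ :=
  (Gt G x ε t).edgeSet.ncard

/-- `N_i(t)`: the neighbors of `i` in `G_t`, as a finset. -/
noncomputable def Nb {n : ℕ} (G : SimpleGraph (Fin n)) (x : ℕ → Fin n → ℝ) (ε : ℝ)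
    (t : ℕ) (i : Fin n) : Finset (Fin n) :=
  Finset.univ.filter fun j => (Gt G x ε t).Adj i j

/-- The update rule of the garbage disposal game. -/
def Update {n : ℕ} (G : SimpleGraph (Fin n)) (x : ℕ → Fin n → ℝ) (ε : ℝ) : Prop :=
  ∀ t i,
    x (t + 1) i =
      (if (Gt G x ε t).edgeSet.Nonempty then (1 : ℝ) else 0) / (Ecard G x ε t : ℝ) *
          ∑ j ∈ Nb G x ε t i, x t j +
        (1 - ((Nb G x ε t i).card : ℝ) / (Ecard G x ε t : ℝ) *
            (if (Gt G x ε t).edgeSet.Nonempty then (1 : ℝ) else 0)) * x t i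

/-- The Lyapunov functional `Z_t`. -/
noncomputable def Z {n : ℕ} (G : SimpleGraph (Fin n)) (x : ℕ → Fin n → ℝ) (ε : ℝ)
    (t : ℕ) : ℝ :=
  ∑ i, ∑ j,
    max (min (ε ^ 2) ((x t i - x t j) ^ 2)) (ε ^ 2 * if ¬ G.Adj i j then 1 else 0)

private lemma ecard_eq {n : ℕ} (G : SimpleGraph (Fin n)) (x : ℕ → Fin n → ℝ) (ε : ℝ) (t : ℕ) :
    Ecard G x ε t = (Gt G x ε t).edgeFinset.card := by
  rw [Ecard, SimpleGraph.edgeFinset, Set.ncard_eq_toFinset_card']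

private lemma deg_le_ecard {n : ℕ} (G : SimpleGraph (Fin n)) (x : ℕ → Fin n → ℝ) (ε : ℝ)
    (t : ℕ) (p : Fin n) : (Nb G x ε t p).card ≤ Ecard G x ε t := by
  rw [ecard_eq]
  apply Finset.card_le_card_of_injOn (fun j => s(p, j))
  · intro j hj
    simp only [Nb, Finset.mem_filter, Finset.mem_univ, true_and] at hj
    simpa [SimpleGraph.mem_edgeFinset, SimpleGraph.mem_edgeSet] using hj
  · intro a _ b _ hab
    exact (Sym2.congr_right).mp hab

private lemma update_eq {n : ℕ} (G : SimpleGraph (Fin n)) (x : ℕ → Fin n → ℝ) (ε : ℝ)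
    (hupd : Update G x ε) (t : ℕ) (hne : (Gt G x ε t).edgeSet.Nonempty) (p : Fin n) :
    x (t + 1) p =
      x t p + (∑ j ∈ Nb G x ε t p, (x t j - x t p)) / (Ecard G x ε t : ℝ) := by
  have hm0 : Ecard G x ε t ≠ 0 := by
    rw [Ecard]
    exact ((Set.ncard_pos (Set.toFinite _)).mpr hne).ne'
  have hm : (Ecard G x ε t : ℝ) ≠ 0 := Nat.cast_ne_zero.mpr hm0
  rw [hupd t p, if_pos hne, Finset.sum_sub_distrib, Finset.sum_const, nsmul_eq_mul]
  field_simp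
  ring

private lemma one_step {n : ℕ} (G : SimpleGraph (Fin n)) (x : ℕ → Fin n → ℝ) (ε : ℝ)
    (hε : 0 < ε) (hupd : Update G x ε) (i : Fin n) (t : ℕ)
    (ht : (Nb G x ε t i).card + 1 ≤ Ecard G x ε t) :
    4 * (x (t + 1) i - x t i) ^ 2 ≤ Z G x ε t - Z G x ε (t + 1) := by
  classical
  set m : ℕ := Ecard G x ε t with hmdef
  have hm0 : m ≠ 0 := by omega
  have hne : (Gt G x ε t).edgeSet.Nonempty := by
    rw [← Set.ncard_pos (Set.toFinite _)]
    exact Nat.pos_of_ne_zero hm0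
  have hmR : (m : ℝ) ≠ 0 := Nat.cast_ne_zero.mpr hm0
  set y : Fin n → ℝ := x t with hy
  set d : Fin n → ℝ := fun p => x (t + 1) p - x t p with hd
  set w : Fin n → Fin n → ℝ := fun p q => if (Gt G x ε t).Adj p q then 1 else 0 with hw
  have hwsymm : ∀ p q, w p q = w q p := by
    intro p q
    simp only [hw]
    by_cases hpq : (Gt G x ε t).Adj p q
    · rw [if_pos hpq, if_pos hpq.symm]
    · rw [if_neg hpq, if_neg (fun h => hpq h.symm)]
  have hwnn : ∀ p q, 0 ≤ w p q := fun p q => by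
    simp only [hw]; split <;> norm_num
  -- F1 : inner weighted sum
  have hF1 : ∀ p, ∑ q, w p q * (y p - y q) = -(m : ℝ) * d p := by
    intro p
    have hdp : d p = (∑ j ∈ Nb G x ε t p, (y j - y p)) / (m : ℝ) := by
      simp only [hd, hy, update_eq G x ε hupd t hne p, hmdef]
      ring
    have : ∑ q, w p q * (y p - y q) = ∑ j ∈ Nb G x ε t p, (y p - y j) := by
      rw [Nb, Finset.sum_filter]
      refine Finset.sum_congr rfl fun q _ => ?_
      simp only [hw]
      split <;> ring
    rw [this]
    have : ∑ j ∈ Nb G x ε t p, (y p - y j) = -(∑ j ∈ Nb G x ε t p, (y j - y p)) := by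
      rw [← Finset.sum_neg_distrib]
      exact Finset.sum_congr rfl fun q _ => by ring
    rw [this, hdp]
    field_simp
  -- F2 : degree
  have hF2 : ∀ p, ∑ q, w p q = ((Nb G x ε t p).card : ℝ) := by
    intro p
    have h1 : ((Nb G x ε t p).card : ℝ) = ∑ j ∈ Nb G x ε t p, (1 : ℝ) := by
      rw [Finset.sum_const, nsmul_eq_mul, mul_one]
    rw [h1, Nb, Finset.sum_filter]
  -- Step 1 : Z decrease dominated by the active-edge quadratic decrease
  have hstep1 : ∑ p, ∑ q, w p q * ((y p - y q) ^ 2 - (x (t+1) p - x (t+1) q) ^ 2)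
      ≤ Z G x ε t - Z G x ε (t + 1) := by
    rw [Z, Z, ← Finset.sum_sub_distrib]
    refine Finset.sum_le_sum fun p _ => ?_
    rw [← Finset.sum_sub_distrib]
    refine Finset.sum_le_sum fun q _ => ?_
    by_cases hadj : (Gt G x ε t).Adj p q
    · have hG : G.Adj p q := hadj.1
      have hifz : (ε ^ 2 * if ¬ G.Adj p q then (1:ℝ) else 0) = 0 := by
        rw [if_neg (not_not.mpr hG), mul_zero]
      have hle : (y p - y q) ^ 2 ≤ ε ^ 2 := by
        have := hadj.2
        calc (y p - y q) ^ 2 = |y p - y q| ^ 2 := (sq_abs _).symm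
          _ ≤ ε ^ 2 := by
            apply pow_le_pow_left₀ (abs_nonneg _) this
      have h1 : max (min (ε ^ 2) ((x t p - x t q) ^ 2))
          (ε ^ 2 * if ¬ G.Adj p q then (1:ℝ) else 0) = (y p - y q) ^ 2 := by
        rw [hifz, min_eq_right hle, max_eq_left (sq_nonneg _)]
      have h2 : max (min (ε ^ 2) ((x (t+1) p - x (t+1) q) ^ 2))
          (ε ^ 2 * if ¬ G.Adj p q then (1:ℝ) else 0) ≤ (x (t+1) p - x (t+1) q) ^ 2 := by
        rw [hifz]
        exact max_le (min_le_right _ _) (sq_nonneg _)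
      have hw1 : w p q = 1 := by simp only [hw, if_pos hadj]
      rw [hw1, one_mul, h1]
      linarith [h2]
    · have hw0 : w p q = 0 := by simp only [hw, if_neg hadj]
      rw [hw0, zero_mul, sub_nonneg]
      by_cases hG : G.Adj p q
      · have hnb : ¬ |x t p - x t q| ≤ ε := fun hh => hadj ⟨hG, hh⟩
        have hgt : ε ^ 2 ≤ (x t p - x t q) ^ 2 := by
          have : ε ≤ |x t p - x t q| := le_of_not_ge hnb
          calc ε ^ 2 ≤ |x t p - x t q| ^ 2 := by
                apply pow_le_pow_left₀ hε.le this
            _ = (x t p - x t q) ^ 2 := sq_abs _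
        have hifz : (ε ^ 2 * if ¬ G.Adj p q then (1:ℝ) else 0) = 0 := by
          rw [if_neg (not_not.mpr hG), mul_zero]
        rw [hifz, min_eq_left hgt, max_eq_left (sq_nonneg ε)]
        exact max_le (min_le_left _ _) (sq_nonneg ε)
      · have hif1 : (ε ^ 2 * if ¬ G.Adj p q then (1:ℝ) else 0) = ε ^ 2 := by
          rw [if_pos hG, mul_one]
        rw [hif1, max_eq_right (min_le_left _ _), max_eq_right (min_le_left _ _)]
  -- Step 2 : algebraic identity
  have hA : ∑ p, ∑ q, w p q * (y p - y q) * d p = -(m : ℝ) * ∑ p, d p ^ 2 := by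
    rw [Finset.mul_sum]
    refine Finset.sum_congr rfl fun p _ => ?_
    rw [← Finset.sum_mul, hF1]
    ring
  have hB : ∑ p, ∑ q, w p q * (y p - y q) * d q = (m : ℝ) * ∑ p, d p ^ 2 := by
    rw [Finset.sum_comm, Finset.mul_sum]
    refine Finset.sum_congr rfl fun q _ => ?_
    have : ∑ p, w p q * (y p - y q) * d q = (∑ p, w q p * (y q - y p)) * (-(d q)) := by
      rw [Finset.sum_mul]
      refine Finset.sum_congr rfl fun p _ => ?_
      rw [hwsymm p q]
      ring
    rw [this, hF1]
    ring
  have hC : ∑ p, ∑ q, w p q * (d p - d q) ^ 2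
      ≤ 4 * ∑ p, ((Nb G x ε t p).card : ℝ) * d p ^ 2 := by
    have hpt : ∑ p, ∑ q, w p q * (d p - d q) ^ 2
        ≤ ∑ p, ∑ q, w p q * (2 * d p ^ 2 + 2 * d q ^ 2) := by
      refine Finset.sum_le_sum fun p _ => Finset.sum_le_sum fun q _ => ?_
      have : (d p - d q) ^ 2 ≤ 2 * d p ^ 2 + 2 * d q ^ 2 := by nlinarith [sq_nonneg (d p + d q)]
      exact mul_le_mul_of_nonneg_left this (hwnn p q)
    refine hpt.trans_eq ?_
    have e1 : ∑ p, ∑ q, w p q * (2 * d p ^ 2 + 2 * d q ^ 2)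
        = 2 * (∑ p, ∑ q, w p q * d p ^ 2) + 2 * (∑ p, ∑ q, w p q * d q ^ 2) := by
      rw [Finset.mul_sum, Finset.mul_sum, ← Finset.sum_add_distrib]
      refine Finset.sum_congr rfl fun p _ => ?_
      rw [Finset.mul_sum, Finset.mul_sum, ← Finset.sum_add_distrib]
      exact Finset.sum_congr rfl fun q _ => by ring
    have e2 : ∑ p, ∑ q, w p q * d p ^ 2 = ∑ p, ((Nb G x ε t p).card : ℝ) * d p ^ 2 := by
      refine Finset.sum_congr rfl fun p _ => ?_
      rw [← Finset.sum_mul, hF2]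
    have e3 : ∑ p, ∑ q, w p q * d q ^ 2 = ∑ p, ((Nb G x ε t p).card : ℝ) * d p ^ 2 := by
      rw [Finset.sum_comm]
      refine Finset.sum_congr rfl fun q _ => ?_
      have : ∑ p, w p q * d q ^ 2 = (∑ p, w q p) * d q ^ 2 := by
        rw [Finset.sum_mul]
        exact Finset.sum_congr rfl fun p _ => by rw [hwsymm p q]
      rw [this, hF2]
    rw [e1, e2, e3]
    ring
  have hident : ∑ p, ∑ q, w p q * ((y p - y q) ^ 2 - (x (t+1) p - x (t+1) q) ^ 2)
      = 4 * (m : ℝ) * (∑ p, d p ^ 2) - ∑ p, ∑ q, w p q * (d p - d q) ^ 2 := by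
    have expand : ∀ p q, w p q * ((y p - y q) ^ 2 - (x (t+1) p - x (t+1) q) ^ 2)
        = -2 * (w p q * (y p - y q) * d p) + 2 * (w p q * (y p - y q) * d q)
          - w p q * (d p - d q) ^ 2 := by
      intro p q
      have hp : x (t+1) p = y p + d p := by simp [hd, hy]
      have hq : x (t+1) q = y q + d q := by simp [hd, hy]
      rw [hp, hq]
      ring
    calc ∑ p, ∑ q, w p q * ((y p - y q) ^ 2 - (x (t+1) p - x (t+1) q) ^ 2)
        = ∑ p, ∑ q, (-2 * (w p q * (y p - y q) * d p) + 2 * (w p q * (y p - y q) * d q)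
          - w p q * (d p - d q) ^ 2) := by
          exact Finset.sum_congr rfl fun p _ => Finset.sum_congr rfl fun q _ => expand p q
      _ = -2 * (∑ p, ∑ q, w p q * (y p - y q) * d p)
          + 2 * (∑ p, ∑ q, w p q * (y p - y q) * d q)
          - ∑ p, ∑ q, w p q * (d p - d q) ^ 2 := by
          simp only [Finset.mul_sum, Finset.sum_add_distrib, Finset.sum_sub_distrib]
      _ = 4 * (m : ℝ) * (∑ p, d p ^ 2) - ∑ p, ∑ q, w p q * (d p - d q) ^ 2 := by
          rw [hA, hB]; ring
  -- Step 3 : conclude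
  have hdeg : ∀ p, ((Nb G x ε t p).card : ℝ) ≤ (m : ℝ) := fun p =>
    Nat.cast_le.mpr (deg_le_ecard G x ε t p)
  have hfinal : 4 * d i ^ 2 ≤ 4 * (m : ℝ) * (∑ p, d p ^ 2)
      - 4 * ∑ p, ((Nb G x ε t p).card : ℝ) * d p ^ 2 := by
    have hrw : 4 * (m : ℝ) * (∑ p, d p ^ 2) - 4 * ∑ p, ((Nb G x ε t p).card : ℝ) * d p ^ 2
        = ∑ p, 4 * ((m : ℝ) - ((Nb G x ε t p).card : ℝ)) * d p ^ 2 := by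
      rw [Finset.mul_sum, Finset.mul_sum, ← Finset.sum_sub_distrib]
      exact Finset.sum_congr rfl fun p _ => by ring
    rw [hrw]
    have hsingle : 4 * ((m : ℝ) - ((Nb G x ε t i).card : ℝ)) * d i ^ 2
        ≤ ∑ p, 4 * ((m : ℝ) - ((Nb G x ε t p).card : ℝ)) * d p ^ 2 := by
      apply Finset.single_le_sum (f := fun p => 4 * ((m : ℝ) - ((Nb G x ε t p).card : ℝ)) * d p ^ 2)
        (fun p _ => mul_nonneg (mul_nonneg (by norm_num) (by linarith [hdeg p])) (sq_nonneg _))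
        (Finset.mem_univ i)
    refine le_trans ?_ hsingle
    have h1 : (1 : ℝ) ≤ (m : ℝ) - ((Nb G x ε t i).card : ℝ) := by
      have : ((Nb G x ε t i).card : ℝ) + 1 ≤ (m : ℝ) := by
        exact_mod_cast Nat.cast_le.mpr ht
      linarith
    nlinarith [sq_nonneg (d i)]
  have : 4 * d i ^ 2 ≤ ∑ p, ∑ q, w p q * ((y p - y q) ^ 2 - (x (t+1) p - x (t+1) q) ^ 2) := by
    rw [hident]
    have : 4 * ∑ p, ((Nb G x ε t p).card : ℝ) * d p ^ 2
        ≥ ∑ p, ∑ q, w p q * (d p - d q) ^ 2 := hC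
    linarith
  have hdi : d i = x (t+1) i - x t i := rfl
  calc 4 * (x (t+1) i - x t i) ^ 2 = 4 * d i ^ 2 := by rw [hdi]
    _ ≤ _ := this.trans hstep1

/-- Cauchy-type estimate: `(x_i(t) − x_i(t+k))² ≤ (k/4)(Z_t − Z_{t+k})` when
`|E_t| − |N_i(t)| ≥ 1` for all `t`. -/
theorem cauchy_estimate {n : ℕ} (G : SimpleGraph (Fin n)) (x : ℕ → Fin n → ℝ)
    (ε : ℝ) (hε : 0 < ε) (hx0 : ∀ i, 0 ≤ x 0 i) (hupd : Update G x ε)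
    (i : Fin n) (h : ∀ t : ℕ, (Nb G x ε t i).card + 1 ≤ Ecard G x ε t) :
    ∀ t k : ℕ, (x t i - x (t + k) i) ^ 2 ≤
      (k : ℝ) / 4 * (Z G x ε t - Z G x ε (t + k)) := by
  intro t k
  have hstep : ∀ s : ℕ, 4 * (x (s + 1) i - x s i) ^ 2 ≤ Z G x ε s - Z G x ε (s + 1) :=
    fun s => one_step G x ε hε hupd i s (h s)
  have hsum : x (t + k) i - x t i
      = ∑ s ∈ Finset.range k, (x (t + s + 1) i - x (t + s) i) := by
    have := Finset.sum_range_sub (fun s => x (t + s) i) k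
    simpa [add_assoc] using this.symm
  have hCS : (x t i - x (t + k) i) ^ 2
      ≤ (k : ℝ) * ∑ s ∈ Finset.range k, (x (t + s + 1) i - x (t + s) i) ^ 2 := by
    have h1 : (x t i - x (t + k) i) ^ 2 = (x (t + k) i - x t i) ^ 2 := by ring
    rw [h1, hsum]
    have := sq_sum_le_card_mul_sum_sq (s := Finset.range k)
      (f := fun s => x (t + s + 1) i - x (t + s) i)
    simpa using this
  have htel : ∑ s ∈ Finset.range k, (Z G x ε (t + s) - Z G x ε (t + s + 1))
      = Z G x ε t - Z G x ε (t + k) := by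
    have := Finset.sum_range_sub' (fun s => Z G x ε (t + s)) k
    simpa [add_assoc] using this
  have hsum2 : ∑ s ∈ Finset.range k, (x (t + s + 1) i - x (t + s) i) ^ 2
      ≤ (1 / 4) * (Z G x ε t - Z G x ε (t + k)) := by
    rw [← htel, Finset.mul_sum]
    refine Finset.sum_le_sum fun s _ => ?_
    have := hstep (t + s)
    linarith
  calc (x t i - x (t + k) i) ^ 2
      ≤ (k : ℝ) * ∑ s ∈ Finset.range k, (x (t + s + 1) i - x (t + s) i) ^ 2 := hCS
    _ ≤ (k : ℝ) * ((1 / 4) * (Z G x ε t - Z G x ε (t + k))) :=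
        mul_le_mul_of_nonneg_left hsum2 (Nat.cast_nonneg k)
    _ = (k : ℝ) / 4 * (Z G x ε t - Z G x ε (t + k)) := by ring
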